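/- Let d ≥ 1, let v : ℝ^d × [0,1] → ℝ^d be continuous and uniformly Lipschitz in its first argument with flow X, and let g : ℝ^d → ℝ be differentiable. Suppose there is a constant C ≥ 0 such that ⟨v(x,t), ∇g(x)⟩ ≤ C·|g(x)| for all x ∈ ℝ^d and t ∈ [0,1] (a quantitative version of tangency of v to the level set {g = 0}). Then for every ξ ∈ ℝ^d with g(ξ) ≤ 0 one has g(X(ξ,t)) ≤ 0 for all t ∈ [0,1]; that is, the flow leaves the sublevel set {g ≤ 0} invariant. -/

import Mathlib

open scoped RealInnerProductSpace

/-- Let `v : ℝ^d × [0,1] → ℝ^d` be continuous and uniformly Lipschitz in its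
first argument with flow `X`, and let `g : ℝ^d → ℝ` be differentiable. If there is `C ≥ 0` with
`⟨v(x,t), ∇g(x)⟩ ≤ C·|g(x)|` for all `x` and `t ∈ [0,1]`, then the flow leaves the sublevel set
`{g ≤ 0}` invariant: `g(ξ) ≤ 0` implies `g(X(ξ,t)) ≤ 0` for all `t ∈ [0,1]`. -/
theorem flow_invariance_sublevel_set
    (d : ℕ) (hd : 1 ≤ d)
    (v : EuclideanSpace ℝ (Fin d) → ℝ → EuclideanSpace ℝ (Fin d))
    (hv_cont : Continuous (fun p : EuclideanSpace ℝ (Fin d) × ℝ => v p.1 p.2))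
    (L : ℝ) (hL : 0 < L)
    (hv_lip : ∀ t ∈ Set.Icc (0:ℝ) 1, ∀ x y : EuclideanSpace ℝ (Fin d),
      ‖v x t - v y t‖ ≤ L * ‖x - y‖)
    (X : EuclideanSpace ℝ (Fin d) → ℝ → EuclideanSpace ℝ (Fin d))
    (hX0 : ∀ ξ, X ξ 0 = ξ)
    (hX : ∀ ξ, ∀ t ∈ Set.Icc (0:ℝ) 1, HasDerivAt (X ξ) (v (X ξ t) t) t)
    (g : EuclideanSpace ℝ (Fin d) → ℝ) (hg : Differentiable ℝ g)
    (C : ℝ) (hC : 0 ≤ C)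
    (htang : ∀ x : EuclideanSpace ℝ (Fin d), ∀ t ∈ Set.Icc (0:ℝ) 1,
      ⟪v x t, gradient g x⟫ ≤ C * |g x|) :
    ∀ ξ : EuclideanSpace ℝ (Fin d), g ξ ≤ 0 → ∀ t ∈ Set.Icc (0:ℝ) 1, g (X ξ t) ≤ 0 := by
  intro ξ hξ t₁ ht₁
  -- φ = g ∘ X ξ, φ' its derivative
  set φ : ℝ → ℝ := fun t => g (X ξ t) with hφ
  set φ' : ℝ → ℝ := fun t => ⟪gradient g (X ξ t), v (X ξ t) t⟫ with hφ'
  have hderiv : ∀ t ∈ Set.Icc (0:ℝ) 1, HasDerivAt φ (φ' t) t := by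
    intro t ht
    have h1 : HasGradientAt g (gradient g (X ξ t)) (X ξ t) :=
      (hg (X ξ t)).hasGradientAt
    have h2 : HasFDerivAt g (InnerProductSpace.toDual ℝ _ (gradient g (X ξ t))) (X ξ t) :=
      hasGradientAt_iff_hasFDerivAt.mp h1
    have := h2.comp_hasDerivAt t (hX ξ t ht)
    rw [InnerProductSpace.toDual_apply_apply] at this
    exact this
  have hbound : ∀ t ∈ Set.Icc (0:ℝ) 1, φ' t ≤ C * |φ t| := by
    intro t ht
    have := htang (X ξ t) t ht
    rwa [real_inner_comm] at this
  by_contra hpos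
  push_neg at hpos
  have ht₁pos : 0 < φ t₁ := hpos
  -- the set of times in [0, t₁] where φ ≤ 0
  set S : Set ℝ := {t | t ∈ Set.Icc (0:ℝ) t₁ ∧ φ t ≤ 0} with hS
  have h0S : (0:ℝ) ∈ S := by
    refine ⟨⟨le_refl 0, ht₁.1⟩, ?_⟩
    simpa [φ, hX0] using hξ
  have hSne : S.Nonempty := ⟨0, h0S⟩
  have hSbdd : BddAbove S := ⟨t₁, fun t ht => ht.1.2⟩
  set t₀ : ℝ := sSup S with ht₀
  have ht₀mem : t₀ ∈ Set.Icc (0:ℝ) t₁ :=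
    ⟨le_csSup hSbdd h0S, csSup_le hSne fun t ht => ht.1.2⟩
  have hsub : Set.Icc (0:ℝ) t₁ ⊆ Set.Icc (0:ℝ) 1 :=
    Set.Icc_subset_Icc le_rfl ht₁.2
  have hcont : ∀ t ∈ Set.Icc (0:ℝ) t₁, ContinuousAt φ t := fun t ht =>
    (hderiv t (hsub ht)).continuousAt
  -- φ t₀ ≤ 0
  have ht₀cl : t₀ ∈ closure S := (Real.isLUB_sSup hSne hSbdd).mem_closure hSne
  have hφt₀ : φ t₀ ≤ 0 := by
    have h1 : φ t₀ ∈ closure (φ '' S) :=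
      ((hcont t₀ ht₀mem).continuousWithinAt).mem_closure_image ht₀cl
    have h2 : closure (φ '' S) ⊆ Set.Iic 0 := by
      rw [isClosed_Iic.closure_subset_iff]
      rintro _ ⟨t, ht, rfl⟩
      exact ht.2
    exact h2 h1
  have ht₀lt : t₀ < t₁ := by
    rcases eq_or_lt_of_le ht₀mem.2 with h | h
    · exact absurd (h ▸ hφt₀) (not_le.mpr ht₁pos)
    · exact h
  -- φ t₀ = 0
  have hφt₀0 : φ t₀ = 0 := by
    rcases eq_or_lt_of_le hφt₀ with h | h
    · exact h
    · exfalso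
      have hev : ∀ᶠ s in nhdsWithin t₀ (Set.Ioi t₀), φ s < 0 :=
        ((hcont t₀ ht₀mem).eventually_lt_const h).filter_mono nhdsWithin_le_nhds
      have hev2 : ∀ᶠ s in nhdsWithin t₀ (Set.Ioi t₀), s ∈ Set.Ioo t₀ t₁ :=
        Ioo_mem_nhdsGT_of_mem ⟨le_rfl, ht₀lt⟩
      obtain ⟨s, hs1, hs2⟩ := (hev.and hev2).exists
      have : s ∈ S := ⟨⟨le_trans ht₀mem.1 hs2.1.le, hs2.2.le⟩, hs1.le⟩
      exact absurd (le_csSup hSbdd this) (not_le.mpr hs2.1)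
  -- Grönwall on [t₀, t₁]
  have key : ∀ x ∈ Set.Icc t₀ t₁, φ x ≤ gronwallBound 0 C 0 (x - t₀) := by
    apply le_gronwallBound_of_liminf_deriv_right_le (f' := φ')
    · intro x hx
      exact (hcont x ⟨le_trans ht₀mem.1 hx.1, hx.2⟩).continuousWithinAt
    · intro x hx r hr
      exact ((hderiv x (hsub ⟨le_trans ht₀mem.1 hx.1, hx.2.le⟩)).hasDerivWithinAt.liminf_right_slope_le hr)
    · exact hφt₀0.le
    · intro x hx
      have hx01 : x ∈ Set.Icc (0:ℝ) 1 := hsub ⟨le_trans ht₀mem.1 hx.1, hx.2.le⟩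
      have hφx : 0 ≤ φ x := by
        by_contra hneg
        push_neg at hneg
        have hxS : x ∈ S := ⟨⟨le_trans ht₀mem.1 hx.1, hx.2.le⟩, hneg.le⟩
        have hxle : x ≤ t₀ := le_csSup hSbdd hxS
        have : x = t₀ := le_antisymm hxle hx.1
        rw [this, hφt₀0] at hneg
        exact lt_irrefl 0 hneg
      calc φ' x ≤ C * |φ x| := hbound x hx01
        _ = C * φ x + 0 := by rw [abs_of_nonneg hφx, add_zero]
  have := key t₁ ⟨ht₀mem.2, le_rfl⟩
  rw [gronwallBound_ε0_δ0] at this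
  exact absurd this (not_le.mpr ht₁pos)
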